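/- Let d ≥ 2 and let K ⊆ 𝕋 be a nonempty compact set invariant under g_d(z) = conj(z)^d (i.e., g_d(K) ⊆ K) whose smallest closed circular arc H(K) containing K has arc length strictly less than 2π/(d+1). Then K is a single point, which is a fixed point of g_d. -/

import Mathlib

/-- The closed circular arc of the unit circle starting at angle `a` and of
arc length `ℓ`. -/
def circleArc (a ℓ : ℝ) : Set ℂ :=
  (fun θ : ℝ => Complex.exp (θ * Complex.I)) '' Set.Icc a (a + ℓ)

/-- Let `d ≥ 2` and let `K` be a nonempty compact subset of the unit circle
invariant under `g_d(z) = conj(z)^d`, contained in a closed arc of length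
strictly less than `2π/(d+1)`. Then `K` is a single point, which is a fixed
point of `g_d`. -/
theorem small_invariant_set_is_fixed_point (d : ℕ) (hd : 2 ≤ d)
    (K : Set ℂ) (hKcirc : K ⊆ {z : ℂ | ‖z‖ = 1})
    (hKne : K.Nonempty) (hKcomp : IsCompact K)
    (hinv : ∀ z ∈ K, (starRingEnd ℂ z) ^ d ∈ K)
    (a ℓ : ℝ) (hℓ0 : 0 ≤ ℓ) (hℓ : ℓ < 2 * Real.pi / (d + 1))
    (harc : K ⊆ circleArc a ℓ) :
    ∃ z : ℂ, K = {z} ∧ (starRingEnd ℂ z) ^ d = z := by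
  have hπ : 0 < Real.pi := Real.pi_pos
  have hd1 : (0:ℝ) < (d:ℝ) + 1 := by positivity
  have hℓd : ℓ * ((d:ℝ) + 1) < 2 * Real.pi := by
    rw [div_eq_mul_inv] at hℓ
    calc ℓ * ((d:ℝ) + 1) < 2 * Real.pi * ((d:ℝ)+1)⁻¹ * ((d:ℝ)+1) := by
          exact mul_lt_mul_of_pos_right hℓ hd1
      _ = 2 * Real.pi := by field_simp
  -- the angle set
  set f : ℝ → ℂ := fun θ => Complex.exp (θ * Complex.I) with hf
  set S : Set ℝ := Set.Icc a (a + ℓ) ∩ f ⁻¹' K with hS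
  have hScomp : IsCompact S :=
    isCompact_Icc.inter_right (hKcomp.isClosed.preimage (by fun_prop))
  have hmem : ∀ z ∈ K, ∃ θ ∈ S, f θ = z := by
    intro z hz
    obtain ⟨θ, hθ, hθz⟩ := harc hz
    exact ⟨θ, ⟨hθ, by simpa [hS, Set.mem_preimage, hf, hθz] using hz⟩, hθz⟩
  have hSne : S.Nonempty := by
    obtain ⟨z, hz⟩ := hKne
    obtain ⟨θ, hθ, _⟩ := hmem z hz
    exact ⟨θ, hθ⟩
  set θ₁ := sInf S with hθ₁
  set θ₂ := sSup S with hθ₂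
  have h1 : θ₁ ∈ S := hScomp.sInf_mem hSne
  have h2 : θ₂ ∈ S := hScomp.sSup_mem hSne
  have hlow : ∀ θ ∈ S, θ₁ ≤ θ := fun θ hθ => csInf_le hScomp.bddBelow hθ
  have hhigh : ∀ θ ∈ S, θ ≤ θ₂ := fun θ hθ => le_csSup hScomp.bddAbove hθ
  have hL : θ₂ - θ₁ ≤ ℓ := by
    have := h1.1.1; have := h2.1.2; linarith
  have hL0 : 0 ≤ θ₂ - θ₁ := by linarith [hlow θ₂ h2]
  -- invariance on angles
  have key : ∀ θ ∈ S, ∃ φ ∈ S, ∃ n : ℤ, φ = -((d:ℝ) * θ) + n * (2 * Real.pi) := by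
    intro θ hθ
    have hK : f θ ∈ K := hθ.2
    have hKi := hinv _ hK
    have hc : (starRingEnd ℂ) (f θ) ^ d = Complex.exp ((-((d:ℝ) * θ) : ℝ) * Complex.I) := by
      rw [hf]
      rw [← Complex.exp_conj, ← Complex.exp_nat_mul]
      congr 1
      simp [map_mul, Complex.conj_I]
      push_cast
      ring
    rw [hc] at hKi
    obtain ⟨φ, hφ, hφeq⟩ := hmem _ hKi
    rw [hf] at hφeq
    rw [Complex.exp_eq_exp_iff_exists_int] at hφeq
    obtain ⟨n, hn⟩ := hφeq
    refine ⟨φ, hφ, n, ?_⟩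
    have hI : (φ : ℂ) * Complex.I = (↑(-((d:ℝ) * θ) + n * (2 * Real.pi)) : ℂ) * Complex.I := by
      rw [hn]; push_cast; ring
    have := mul_right_cancel₀ Complex.I_ne_zero hI
    exact_mod_cast this
  obtain ⟨φ₁, hφ₁S, n₁, hn₁⟩ := key θ₁ h1
  obtain ⟨φ₂, hφ₂S, n₂, hn₂⟩ := key θ₂ h2
  have hb1 : θ₁ ≤ φ₁ ∧ φ₁ ≤ θ₂ := ⟨hlow _ hφ₁S, hhigh _ hφ₁S⟩
  have hb2 : θ₁ ≤ φ₂ ∧ φ₂ ≤ θ₂ := ⟨hlow _ hφ₂S, hhigh _ hφ₂S⟩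
  -- φ₁ - φ₂ = d (θ₂ - θ₁) + 2π (n₁ - n₂)
  have hm0 : n₁ - n₂ = 0 := by
    have hdiff : φ₁ - φ₂ = (d:ℝ) * (θ₂ - θ₁) + ((n₁ - n₂ : ℤ) : ℝ) * (2 * Real.pi) := by
      rw [hn₁, hn₂]; push_cast; ring
    have hub : ((n₁ - n₂ : ℤ) : ℝ) < 1 := by nlinarith [hb1.1, hb1.2, hb2.1, hb2.2]
    have hlb : (-1 : ℝ) < ((n₁ - n₂ : ℤ) : ℝ) := by nlinarith [hb1.1, hb1.2, hb2.1, hb2.2]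
    have h1' : n₁ - n₂ < 1 := by exact_mod_cast hub
    have h2' : (-1 : ℤ) < n₁ - n₂ := by exact_mod_cast hlb
    omega
  have hdiff : φ₁ - φ₂ = (d:ℝ) * (θ₂ - θ₁) := by
    have hn : n₁ = n₂ := by omega
    rw [hn₁, hn₂, hn]; push_cast; ring
  have hLz : θ₂ - θ₁ = 0 := by
    have hdd : (2:ℝ) ≤ (d:ℝ) := by exact_mod_cast hd
    nlinarith [hb1.1, hb1.2, hb2.1, hb2.2]
  have hθeq : θ₁ = θ₂ := by linarith
  refine ⟨f θ₁, ?_, ?_⟩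
  · ext z
    constructor
    · intro hz
      obtain ⟨θ, hθS, hθz⟩ := hmem z hz
      have : θ = θ₁ := le_antisymm (hθeq ▸ hhigh θ hθS) (hlow θ hθS)
      simp [← hθz, this]
    · intro hz
      simp at hz
      rw [hz]; exact h1.2
  · have hKi := hinv _ h1.2
    obtain ⟨θ, hθS, hθz⟩ := hmem _ hKi
    have : θ = θ₁ := le_antisymm (hθeq ▸ hhigh θ hθS) (hlow θ hθS)
    rw [← hθz, this]
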